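/- arXiv:1912.12992 — 4 statements merged into one kernel-verified Lean document; each statement's English description precedes it below -/
import Mathlib

section
/- Let \(n_0\) be a positive integer, \(n_i = 3n_{i-1} + d_i\) with \(d_i \in \{1,2,3\}\), and let C > 0. Suppose a sequence of non-negative reals \(T_i\) satisfies \(T_0 \le \tfrac{4}{9} n_0^2 + C n_0\) and \(T_{i+1} \le 2 T_i + \tfrac{1}{3} n_{i+1}^2 + C n_{i+1}\) for all \(i \ge 0\). Then there exists a constant C' > 0 such that for all \(i \ge 0\), \(T_i \le \Big(\tfrac{3}{7} + \tfrac{1}{63}\big(\tfrac{2}{9}\big)^{i}\Big) n_i^2 + C' n_i\). -/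
theorem stmt_8 (n d : ℕ → ℕ) (h0 : 1 ≤ n 0)
    (hd : ∀ i, d (i + 1) ∈ ({1, 2, 3} : Set ℕ))
    (hrec : ∀ i, n (i + 1) = 3 * n (i) + d (i + 1))
    (C : ℝ) (hC : 0 < C) (T : ℕ → ℝ) (hT : ∀ i, 0 ≤ T i)
    (hT0 : T 0 ≤ 4 / 9 * (n 0 : ℝ) ^ 2 + C * n 0)
    (hTrec : ∀ i, T (i + 1) ≤ 2 * T i + 1 / 3 * (n (i + 1) : ℝ) ^ 2 + C * n (i + 1)) :
    ∃ C' : ℝ, 0 < C' ∧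
      ∀ i, T i ≤ (3 / 7 + 1 / 63 * (2 / 9) ^ i) * (n i : ℝ) ^ 2 + C' * n i := by
  refine ⟨3 * C + 1, by linarith, ?_⟩
  intro i
  induction i with
  | zero =>
    have hn0 : (0:ℝ) ≤ (n 0 : ℝ) := Nat.cast_nonneg _
    simp only [pow_zero]
    nlinarith [hT0]
  | succ i ih =>
    have hdmem := hd i
    simp only [Set.mem_insert_iff, Set.mem_singleton_iff] at hdmem
    have hD1 : (1:ℝ) ≤ (d (i+1) : ℝ) := by
      rcases hdmem with h | h | h <;> rw [h] <;> norm_num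
    have hD3 : (d (i+1) : ℝ) ≤ 3 := by
      rcases hdmem with h | h | h <;> rw [h] <;> norm_num
    have hN : ((n (i+1)):ℝ) = 3 * (n i : ℝ) + (d (i+1) : ℝ) := by
      rw [hrec i]; push_cast; ring
    have hm : (0:ℝ) ≤ (n i : ℝ) := Nat.cast_nonneg _
    have hp : (0:ℝ) ≤ (2/9:ℝ)^i := by positivity
    have hq : ((2:ℝ)/9)^(i+1) = (2/9:ℝ)^i * (2/9) := pow_succ _ _
    have h1 := hTrec i
    rw [hN] at h1 ⊢
    rw [hq]
    have hD0 : (0:ℝ) ≤ (d (i+1):ℝ) := by linarith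
    nlinarith [ih, mul_nonneg hp hm, mul_nonneg hm hm,
      mul_nonneg (mul_nonneg hp hm) hm,
      mul_nonneg hD0 hm,
      mul_nonneg (mul_nonneg hp hD0) hm,
      mul_nonneg hp (mul_nonneg hD0 hD0),
      mul_le_mul hD1 hD1 (by norm_num) hD0,
      mul_nonneg (by linarith : (0:ℝ) ≤ 2*C+1) (by linarith : (0:ℝ) ≤ (d (i+1):ℝ) - 1)]
end

section
/- Let \(n_0\) be a positive integer and \(n_i = 3n_{i-1} + d_i\) with \(d_i \in \{1,2,3\}\). Suppose \(b_i = \lfloor n_i^2/4 \rfloor\) and \(c_i\) is a sequence of positive reals satisfying \(\tfrac{5}{16} n_i^2 \le c_i \le \big(\tfrac{3}{7} + \tfrac{1}{63}(\tfrac{2}{9})^{i}\big) n_i^2 + C n_i\) for some constant C. Then \(\liminf_{i \to \infty} b_i / c_i \ge \tfrac{7}{12}\). -/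
set_option maxHeartbeats 1000000


theorem stmt_9 (n d : ℕ → ℕ) (h0 : 1 ≤ n 0)
    (hd : ∀ i, d (i + 1) ∈ ({1, 2, 3} : Set ℕ))
    (hrec : ∀ i, n (i + 1) = 3 * n (i) + d (i + 1))
    (b : ℕ → ℕ) (hb : ∀ i, b i = n i ^ 2 / 4)
    (c : ℕ → ℝ) (hc : ∀ i, 0 < c i) (C : ℝ)
    (hlb : ∀ i, 5 / 16 * (n i : ℝ) ^ 2 ≤ c i)
    (hub : ∀ i, c i ≤ (3 / 7 + 1 / 63 * (2 / 9) ^ i) * (n i : ℝ) ^ 2 + C * n i) :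
    7 / 12 ≤ Filter.liminf (fun i => (b i : ℝ) / c i) Filter.atTop := by
  -- growth of n
  have hgrow : ∀ i, i + 1 ≤ n i := by
    intro i
    induction i with
    | zero => simpa using h0
    | succ k ih =>
      have hdk := hd k
      have hd1 : 1 ≤ d (k + 1) := by
        rcases hdk with h | h | h <;> simp_all
      have := hrec k
      omega
  have hn1 : ∀ i, 1 ≤ n i := fun i => le_trans (by omega) (hgrow i)
  -- bounds on b in ℝ
  have hbR : ∀ i, ((n i : ℝ) ^ 2 - 3) / 4 ≤ (b i : ℝ) := by
    intro i
    have h1 : n i ^ 2 ≤ 4 * (n i ^ 2 / 4) + 3 := by omega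
    have h2 : (n i ^ 2 : ℝ) ≤ 4 * ((n i ^ 2 / 4 : ℕ) : ℝ) + 3 := by exact_mod_cast h1
    rw [hb i]; push_cast at h2 ⊢; linarith
  have hbU : ∀ i, (b i : ℝ) ≤ (n i : ℝ) ^ 2 / 4 := by
    intro i
    have h1 : 4 * (n i ^ 2 / 4) ≤ n i ^ 2 := by omega
    have h2 : 4 * ((n i ^ 2 / 4 : ℕ) : ℝ) ≤ ((n i ^ 2 : ℕ) : ℝ) := by exact_mod_cast h1
    rw [hb i]; push_cast at h2 ⊢; linarith
  have hf0 : ∀ i, (0 : ℝ) ≤ (b i : ℝ) / c i := fun i =>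
    div_nonneg (Nat.cast_nonneg _) (hc i).le
  -- upper bound 4/5 gives coboundedness
  have hf45 : ∀ i, (b i : ℝ) / c i ≤ 4 / 5 := by
    intro i
    rw [div_le_iff₀ (hc i)]
    have := hlb i
    have := hbU i
    nlinarith
  have hcob : Filter.IsCoboundedUnder (· ≥ ·) Filter.atTop
      (fun i => (b i : ℝ) / c i) :=
    Filter.isCoboundedUnder_ge_of_le Filter.atTop hf45
  refine le_of_forall_lt fun r hr => ?_
  set m : ℝ := (r + 7 / 12) / 2 with hm
  have hrm : r < m := by simp [hm]; linarith
  have hm712 : m < 7 / 12 := by simp [hm]; linarith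
  refine lt_of_lt_of_le hrm ?_
  refine Filter.le_liminf_of_le hcob ?_
  rcases le_or_gt m 0 with hm0 | hm0
  · exact Filter.Eventually.of_forall fun i => le_trans hm0 (hf0 i)
  -- now 0 < m < 7/12, let ε = 7/12 - m
  set ε : ℝ := 7 / 12 - m with hε
  have hε0 : 0 < ε := by simp [hε]; linarith
  -- eventually (2/9)^i small
  have htend : Filter.Tendsto (fun i : ℕ => ((2 : ℝ) / 9) ^ i) Filter.atTop (nhds 0) := by
    apply tendsto_pow_atTop_nhds_zero_of_lt_one <;> norm_num
  have hE : ∀ᶠ i in Filter.atTop, ((2 : ℝ) / 9) ^ i ≤ 135 / 8 * ε :=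
    htend.eventually_le_const (by linarith)
  -- eventually n i large
  set K : ℝ := (7 * |C| / 12 + 3 / 4) * (32 / (5 * ε)) with hK
  have hNlarge : ∀ᶠ i in Filter.atTop, K ≤ (n i : ℝ) := by
    filter_upwards [Filter.eventually_ge_atTop ⌈K⌉₊] with i hi
    calc K ≤ (⌈K⌉₊ : ℝ) := Nat.le_ceil K
      _ ≤ (i : ℝ) := by exact_mod_cast hi
      _ ≤ (n i : ℝ) := by exact_mod_cast le_trans (by omega) (hgrow i)
  filter_upwards [hE, hNlarge] with i hEi hNi
  -- goal : m ≤ b i / c i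
  rw [le_div_iff₀ (hc i)]
  have hci1 := hlb i
  have hci2 := hub i
  have hbi := hbR i
  set N : ℝ := (n i : ℝ) with hN
  set E : ℝ := ((2 : ℝ) / 9) ^ i with hEdef
  have hE0 : (0 : ℝ) ≤ E := by positivity
  have hN1 : (1 : ℝ) ≤ N := by rw [hN]; exact_mod_cast hn1 i
  have hCabs : C ≤ |C| := le_abs_self C
  have habs0 : (0 : ℝ) ≤ |C| := abs_nonneg C
  -- key: ε * (5/32) * N^2 ≥ (7*|C|/12 + 3/4) * N
  have hkey : (7 * |C| / 12 + 3 / 4) * N ≤ ε * (5 / 32) * N ^ 2 := by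
    have h1 : K * N ≤ N * N := by nlinarith
    have h2 : (7 * |C| / 12 + 3 / 4) * N = ε * (5 / 32) * (K * N) := by
      rw [hK]; field_simp
    nlinarith
  -- key2: (E/108) * N^2 ≤ ε * (5/32) * N^2
  have hkey2 : E / 108 * N ^ 2 ≤ ε * (5 / 32) * N ^ 2 := by
    have hN2 : (0:ℝ) ≤ N ^ 2 := by positivity
    have h : E / 108 ≤ ε * (5 / 32) := by linarith
    exact mul_le_mul_of_nonneg_right h hN2
  -- combine: m * c i ≤ b i
  have hm' : m = 7 / 12 - ε := by simp [hε]
  have hstep : m * c i ≤ 7 / 12 * ((3 / 7 + 1 / 63 * E) * N ^ 2 + C * N)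
      - ε * (5 / 16 * N ^ 2) := by
    have h1 : m * c i = 7 / 12 * c i - ε * c i := by rw [hm']; ring
    have h2 : 7 / 12 * c i ≤ 7 / 12 * ((3 / 7 + 1 / 63 * E) * N ^ 2 + C * N) :=
      mul_le_mul_of_nonneg_left hci2 (by norm_num)
    have h3 : ε * (5 / 16 * N ^ 2) ≤ ε * c i :=
      mul_le_mul_of_nonneg_left hci1 hε0.le
    linarith
  have hfinal : 7 / 12 * ((3 / 7 + 1 / 63 * E) * N ^ 2 + C * N)
      - ε * (5 / 16 * N ^ 2) ≤ (N ^ 2 - 3) / 4 := by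
    have hN0 : (0 : ℝ) ≤ N := by linarith
    have hCN : 7 * C / 12 * N ≤ 7 * |C| / 12 * N :=
      mul_le_mul_of_nonneg_right (by linarith) hN0
    linarith
  linarith
end

section
/- With the clique parallel cleaning model and the initial configuration \(\omega_0(v_i) = k+2\) for \(k \le i \le 2k+2\) and \(\omega_0(v_i) = i\) otherwise on K_{3k+3} (k a non-negative integer), the final configuration of brushes, as a multiset of values over the vertices, equals the initial multiset \(\{0,1,\dots,k-1\} \cup \{k+2 \text{ (with multiplicity } k+3)\} \cup \{2k+3,\dots,3k+2\}\); moreover at every step every vertex holds at most \(3k+2\) brushes. -/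
/-- One step of the parallel cleaning process on the clique `K n`:
all dirty vertices with at least `|D| - 1` brushes are cleaned simultaneously. -/
def cleanStep (n : ℕ) (s : (Fin n → ℕ) × Finset (Fin n)) : (Fin n → ℕ) × Finset (Fin n) :=
  let P := s.2.filter (fun v => s.2.card - 1 ≤ s.1 v)
  (fun v =>
    if v ∈ P then s.1 v - (s.2.card - 1) + (P.card - 1)
    else if v ∈ s.2 then s.1 v + P.card
    else s.1 v,
   s.2 \ P)

/-- The state (brush configuration, set of dirty vertices) of the parallel cleaning
process on `K n` after `t` steps, starting from configuration `ω0` with all vertices dirty. -/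
def cleanState (n : ℕ) (ω0 : Fin n → ℕ) : ℕ → (Fin n → ℕ) × Finset (Fin n)
  | 0 => (ω0, Finset.univ)
  | t + 1 => cleanStep n (cleanState n ω0 t)

namespace CliqueAux

/-- cumulative number of "high" vertices cleaned after `t` steps. -/
def c (k t : ℕ) : ℕ := min (2 ^ t - 1) k

/-- number of dirty vertices after `t` steps (during the first phase). -/
def d (k t : ℕ) : ℕ := 3 * k + 3 - c k t

/-- final value of a cleaned high vertex `j`. -/
def f (k j : ℕ) : ℕ :=
  j + c k (Nat.clog 2 (3 * k + 4 - j) - 1) + c k (Nat.clog 2 (3 * k + 4 - j)) - (3 * k + 3)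

/-- configuration during phase A (`t ≤ size k`). -/
def ωA (k t j : ℕ) : ℕ :=
  if j < d k t then (if k ≤ j ∧ j ≤ 2 * k + 2 then k + 2 else j) + c k t else f k j

/-- final configuration. -/
def ωF (k j : ℕ) : ℕ :=
  if j < k then j + (2 * k + 3) else if j ≤ 2 * k + 2 then k + 2 else f k j

/-- closed form of the whole trajectory. -/
def state (k t : ℕ) : (Fin (3 * k + 3) → ℕ) × Finset (Fin (3 * k + 3)) :=
  if t ≤ Nat.size k then
    (fun v : Fin (3 * k + 3) => ωA k t (v : ℕ), Finset.filter (fun v : Fin (3 * k + 3) => (v : ℕ) < d k t) Finset.univ)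
  else if t = Nat.size k + 1 then
    (fun v => ωF k v, Finset.filter (fun v : Fin (3 * k + 3) => (v : ℕ) < k) Finset.univ)
  else (fun v : Fin (3 * k + 3) => ωF k (v : ℕ), ∅)

lemma cleanStep_def (n : ℕ) (ω : Fin n → ℕ) (D : Finset (Fin n)) :
    cleanStep n (ω, D) =
      (fun v => if v ∈ D.filter (fun v => D.card - 1 ≤ ω v) then
          ω v - (D.card - 1) + ((D.filter (fun v => D.card - 1 ≤ ω v)).card - 1)
        else if v ∈ D then ω v + (D.filter (fun v => D.card - 1 ≤ ω v)).card else ω v,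
       D \ D.filter (fun v => D.card - 1 ≤ ω v)) := rfl

lemma card_filter_fin (n : ℕ) (p : ℕ → Prop) [DecidablePred p] :
    (Finset.filter (fun v : Fin n => p v.val) Finset.univ).card
      = (Finset.filter p (Finset.range n)).card := by
  rw [Finset.card_filter, Finset.card_filter,
    Fin.sum_univ_eq_sum_range (fun j => if p j then 1 else 0) n]

lemma card_filter_lt (n m : ℕ) (h : m ≤ n) :
    (Finset.filter (fun v : Fin n => (v : ℕ) < m) Finset.univ).card = m := by
  rw [card_filter_fin n (fun j => j < m)]
  have : Finset.filter (fun j => j < m) (Finset.range n) = Finset.range m := by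
    ext j; simp [Finset.mem_filter, Finset.mem_range]; omega
  rw [this, Finset.card_range]

lemma card_filter_Ico (n a b : ℕ) (h : b ≤ n) :
    (Finset.filter (fun v : Fin n => a ≤ (v : ℕ) ∧ (v : ℕ) < b) Finset.univ).card = b - a := by
  rw [card_filter_fin n (fun j => a ≤ j ∧ j < b)]
  have : Finset.filter (fun j => a ≤ j ∧ j < b) (Finset.range n) = Finset.Ico a b := by
    ext j; simp [Finset.mem_filter, Finset.mem_Ico]; omega
  rw [this, Nat.card_Ico]

lemma c_le (k t : ℕ) : c k t ≤ k := min_le_right _ _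

lemma c_mono (k : ℕ) {s t : ℕ} (h : s ≤ t) : c k s ≤ c k t := by
  have := Nat.pow_le_pow_right (by norm_num : 1 ≤ 2) h
  unfold c; omega

lemma clog_eq (k t j : ℕ) (hA : 2 ^ t ≤ k) (h1 : d k (t + 1) ≤ j) (h2 : j < d k t) :
    Nat.clog 2 (3 * k + 4 - j) = t + 1 := by
  have hct : c k t = 2 ^ t - 1 := by unfold c; omega
  have hle : c k (t + 1) ≤ 2 ^ (t + 1) - 1 := min_le_left _ _
  have hA1 : 1 ≤ 2 ^ t := Nat.one_le_two_pow
  have hp : (2:ℕ) ^ (t + 1) = 2 * 2 ^ t := by rw [pow_succ]; ring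
  have e1 : 2 ^ t < 3 * k + 4 - j := by unfold d at h2; omega
  have e2 : 3 * k + 4 - j ≤ 2 ^ (t + 1) := by unfold d at h1; omega
  exact le_antisymm ((Nat.clog_le_iff_le_pow one_lt_two).mpr e2)
    ((Nat.lt_clog_iff_pow_lt one_lt_two).mpr e1)

lemma high_spec (k j : ℕ) (hj1 : 2 * k + 3 ≤ j) (hj2 : j ≤ 3 * k + 2) :
    f k j + (3 * k + 3)
        = j + c k (Nat.clog 2 (3 * k + 4 - j) - 1) + c k (Nat.clog 2 (3 * k + 4 - j))
      ∧ c k (Nat.clog 2 (3 * k + 4 - j) - 1) ≤ f k j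
      ∧ f k j < c k (Nat.clog 2 (3 * k + 4 - j)) := by
  set m := 3 * k + 4 - j with hm
  set s := Nat.clog 2 m with hs
  have hm2 : 2 ≤ m := by omega
  have hmk : m ≤ k + 1 := by omega
  have h1 : m ≤ 2 ^ s := Nat.le_pow_clog one_lt_two _
  have h2 : 2 ^ (s - 1) < m := Nat.pow_pred_clog_lt_self one_lt_two hm2
  have hcs : m - 1 ≤ c k s := by
    have : c k s = min (2 ^ s - 1) k := rfl
    omega
  have hcs' : c k s ≤ k := c_le k s
  have hcs1 : c k (s - 1) ≤ m - 2 := by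
    have : c k (s - 1) = min (2 ^ (s - 1) - 1) k := rfl
    omega
  have hf : f k j = j + c k (s - 1) + c k s - (3 * k + 3) := rfl
  omega

lemma f_lt_k (k j : ℕ) (hj1 : 2 * k + 3 ≤ j) (hj2 : j ≤ 3 * k + 2) : f k j < k := by
  obtain ⟨-, -, h3⟩ := high_spec k j hj1 hj2
  have := c_le k (Nat.clog 2 (3 * k + 4 - j))
  omega

lemma f_injOn (k : ℕ) : ∀ x, 2 * k + 3 ≤ x → x ≤ 3 * k + 2 →
    ∀ y, 2 * k + 3 ≤ y → y ≤ 3 * k + 2 → f k x = f k y → x = y := by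
  intro x hx1 hx2 y hy1 hy2 hfe
  obtain ⟨ex, lx, ux⟩ := high_spec k x hx1 hx2
  obtain ⟨ey, ly, uy⟩ := high_spec k y hy1 hy2
  set sx := Nat.clog 2 (3 * k + 4 - x)
  set sy := Nat.clog 2 (3 * k + 4 - y)
  rcases lt_trichotomy sx sy with h | h | h
  · have h1 : c k sx ≤ c k (sy - 1) := c_mono k (by omega)
    omega
  · rw [h] at ex; omega
  · have h1 : c k sy ≤ c k (sx - 1) := c_mono k (by omega)
    omega

lemma ωF_high (k j : ℕ) (h : 2 * k + 3 ≤ j) : ωF k j = f k j := by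
  unfold ωF; rw [if_neg (by omega), if_neg (by omega)]

lemma step (k t : ℕ) : cleanStep (3 * k + 3) (state k t) = state k (t + 1) := by
  rcases lt_trichotomy t (Nat.size k) with ht | ht | ht
  · -- phase A step
    have hA : 2 ^ t ≤ k := Nat.lt_size.mp ht
    have hA1 : 1 ≤ 2 ^ t := Nat.one_le_two_pow
    have hct : c k t = 2 ^ t - 1 := by unfold c; omega
    have hct1 : c k (t + 1) = min (2 ^ t * 2 - 1) k := by unfold c; rw [pow_succ]
    have hdt : d k t = 3 * k + 3 - c k t := rfl
    have hdt1 : d k (t + 1) = 3 * k + 3 - c k (t + 1) := rfl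
    have hd1ge : 2 * k + 3 ≤ d k (t + 1) := by omega
    have hmono : d k (t + 1) ≤ d k t := by omega
    have hS : state k t = (fun v : Fin (3 * k + 3) => ωA k t (v : ℕ),
        Finset.filter (fun v : Fin (3 * k + 3) => (v : ℕ) < d k t) Finset.univ) := by
      unfold state; rw [if_pos (le_of_lt ht)]
    have hS1 : state k (t + 1) = (fun v : Fin (3 * k + 3) => ωA k (t + 1) (v : ℕ),
        Finset.filter (fun v : Fin (3 * k + 3) => (v : ℕ) < d k (t + 1)) Finset.univ) := by
      unfold state; rw [if_pos (by omega : t + 1 ≤ Nat.size k)]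
    rw [hS, hS1, cleanStep_def]
    have hcard : (Finset.filter (fun v : Fin (3 * k + 3) => (v : ℕ) < d k t)
        Finset.univ).card = d k t := card_filter_lt _ _ (by omega)
    rw [hcard]
    have hfil : (Finset.filter (fun v : Fin (3 * k + 3) => (v : ℕ) < d k t)
          Finset.univ).filter (fun v : Fin (3 * k + 3) => d k t - 1 ≤ ωA k t (v : ℕ))
        = Finset.filter
            (fun v : Fin (3 * k + 3) => d k (t + 1) ≤ (v : ℕ) ∧ (v : ℕ) < d k t)
            Finset.univ := by
      rw [Finset.filter_filter]
      ext v
      simp only [Finset.mem_filter, Finset.mem_univ, true_and]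
      unfold ωA
      split_ifs with h1 h2
      · omega
      · omega
      · omega
    rw [hfil]
    have hPcard : (Finset.filter
        (fun v : Fin (3 * k + 3) => d k (t + 1) ≤ (v : ℕ) ∧ (v : ℕ) < d k t)
        Finset.univ).card = d k t - d k (t + 1) := card_filter_Ico _ _ _ (by omega)
    rw [hPcard, Prod.mk.injEq]
    constructor
    · funext v
      simp only [Finset.mem_filter, Finset.mem_univ, true_and]
      by_cases hp : d k (t + 1) ≤ (v : ℕ) ∧ (v : ℕ) < d k t
      · rw [if_pos hp]
        have hnm : ¬(k ≤ (v : ℕ) ∧ (v : ℕ) ≤ 2 * k + 2) := by omega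
        have hl : ωA k t v = (v : ℕ) + c k t := by
          unfold ωA; rw [if_pos hp.2, if_neg hnm]
        have hr : ωA k (t + 1) v = f k (v : ℕ) := by
          unfold ωA; rw [if_neg (by omega)]
        have hfv : f k (v : ℕ) = (v : ℕ) + c k t + c k (t + 1) - (3 * k + 3) := by
          unfold f; rw [clog_eq k t v hA hp.1 hp.2]; simp
        rw [hl, hr, hfv]
        omega
      · rw [if_neg hp]
        by_cases hq : (v : ℕ) < d k t
        · rw [if_pos hq]
          have hq1 : (v : ℕ) < d k (t + 1) := by omega
          unfold ωA
          rw [if_pos hq, if_pos hq1]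
          by_cases hmid : k ≤ (v : ℕ) ∧ (v : ℕ) ≤ 2 * k + 2
          · rw [if_pos hmid]; omega
          · rw [if_neg hmid]; omega
        · rw [if_neg hq]
          unfold ωA
          rw [if_neg hq, if_neg (by omega)]
    · ext v
      simp only [Finset.mem_sdiff, Finset.mem_filter, Finset.mem_univ, true_and]
      omega
  · -- mid step
    subst ht
    have hck : c k (Nat.size k) = k := by
      have := Nat.lt_size_self k; unfold c; omega
    have hd : d k (Nat.size k) = 2 * k + 3 := by unfold d; omega
    have hS : state k (Nat.size k) = (fun v : Fin (3 * k + 3) => ωA k (Nat.size k) (v : ℕ),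
        Finset.filter (fun v : Fin (3 * k + 3) => (v : ℕ) < d k (Nat.size k)) Finset.univ) := by
      unfold state; rw [if_pos le_rfl]
    have hS1 : state k (Nat.size k + 1) = (fun v : Fin (3 * k + 3) => ωF k (v : ℕ),
        Finset.filter (fun v : Fin (3 * k + 3) => (v : ℕ) < k) Finset.univ) := by
      unfold state; rw [if_neg (by omega), if_pos rfl]
    rw [hS, hS1, cleanStep_def]
    have hcard : (Finset.filter (fun v : Fin (3 * k + 3) => (v : ℕ) < d k (Nat.size k))
        Finset.univ).card = d k (Nat.size k) := card_filter_lt _ _ (by omega)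
    rw [hcard]
    have hfil : (Finset.filter (fun v : Fin (3 * k + 3) => (v : ℕ) < d k (Nat.size k))
          Finset.univ).filter (fun v : Fin (3 * k + 3) => d k (Nat.size k) - 1 ≤ ωA k (Nat.size k) (v : ℕ))
        = Finset.filter
            (fun v : Fin (3 * k + 3) => k ≤ (v : ℕ) ∧ (v : ℕ) < 2 * k + 3)
            Finset.univ := by
      rw [Finset.filter_filter]
      ext v
      simp only [Finset.mem_filter, Finset.mem_univ, true_and]
      unfold ωA
      split_ifs with h1 h2
      · omega
      · omega
      · omega
    rw [hfil]
    have hPcard : (Finset.filter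
        (fun v : Fin (3 * k + 3) => k ≤ (v : ℕ) ∧ (v : ℕ) < 2 * k + 3)
        Finset.univ).card = 2 * k + 3 - k := card_filter_Ico _ _ _ (by omega)
    rw [hPcard, Prod.mk.injEq]
    constructor
    · funext v
      simp only [Finset.mem_filter, Finset.mem_univ, true_and]
      by_cases hp : k ≤ (v : ℕ) ∧ (v : ℕ) < 2 * k + 3
      · rw [if_pos hp]
        have hl : ωA k (Nat.size k) v = (k + 2) + c k (Nat.size k) := by
          unfold ωA; rw [if_pos (by omega), if_pos (by omega)]
        have hr : ωF k (v : ℕ) = k + 2 := by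
          unfold ωF; rw [if_neg (by omega), if_pos (by omega)]
        rw [hl, hr]; omega
      · rw [if_neg hp]
        by_cases hq : (v : ℕ) < d k (Nat.size k)
        · rw [if_pos hq]
          have hvk : (v : ℕ) < k := by omega
          have hl : ωA k (Nat.size k) v = (v : ℕ) + c k (Nat.size k) := by
            unfold ωA; rw [if_pos hq, if_neg (by omega)]
          have hr : ωF k (v : ℕ) = (v : ℕ) + (2 * k + 3) := by
            unfold ωF; rw [if_pos hvk]
          rw [hl, hr]; omega
        · rw [if_neg hq]
          have hl : ωA k (Nat.size k) v = f k (v : ℕ) := by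
            unfold ωA; rw [if_neg hq]
          rw [hl, ωF_high k _ (by omega)]
    · ext v
      simp only [Finset.mem_sdiff, Finset.mem_filter, Finset.mem_univ, true_and]
      omega
  · -- t > size k
    by_cases ht2 : t = Nat.size k + 1
    · -- low step
      subst ht2
      have hS : state k (Nat.size k + 1) = (fun v : Fin (3 * k + 3) => ωF k (v : ℕ),
          Finset.filter (fun v : Fin (3 * k + 3) => (v : ℕ) < k) Finset.univ) := by
        unfold state; rw [if_neg (by omega), if_pos rfl]
      have hS1 : state k (Nat.size k + 1 + 1) = (fun v : Fin (3 * k + 3) => ωF k (v : ℕ), ∅) := by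
        unfold state; rw [if_neg (by omega), if_neg (by omega)]
      rw [hS, hS1, cleanStep_def]
      have hcard : (Finset.filter (fun v : Fin (3 * k + 3) => (v : ℕ) < k)
          Finset.univ).card = k := card_filter_lt _ _ (by omega)
      rw [hcard]
      have hfil : (Finset.filter (fun v : Fin (3 * k + 3) => (v : ℕ) < k)
            Finset.univ).filter (fun v : Fin (3 * k + 3) => k - 1 ≤ ωF k (v : ℕ))
          = Finset.filter (fun v : Fin (3 * k + 3) => (v : ℕ) < k) Finset.univ := by
        rw [Finset.filter_filter]
        ext v
        simp only [Finset.mem_filter, Finset.mem_univ, true_and]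
        unfold ωF
        split_ifs with h1 h2
        · omega
        · omega
        · omega
      rw [hfil, hcard, Finset.sdiff_self, Prod.mk.injEq]
      refine ⟨?_, rfl⟩
      funext v
      simp only [Finset.mem_filter, Finset.mem_univ, true_and]
      by_cases hp : (v : ℕ) < k
      · rw [if_pos hp]
        have hl : ωF k (v : ℕ) = (v : ℕ) + (2 * k + 3) := by
          unfold ωF; rw [if_pos hp]
        rw [hl]; omega
      · rw [if_neg hp, if_neg hp]
    · -- done
      have hS : state k t = (fun v : Fin (3 * k + 3) => ωF k (v : ℕ), ∅) := by
        unfold state; rw [if_neg (by omega), if_neg (by omega)]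
      have hS1 : state k (t + 1) = (fun v : Fin (3 * k + 3) => ωF k (v : ℕ), ∅) := by
        unfold state; rw [if_neg (by omega), if_neg (by omega)]
      rw [hS, hS1, cleanStep_def]
      simp

lemma ωA_le (k t j : ℕ) (hj : j < 3 * k + 3) : ωA k t j ≤ 3 * k + 2 := by
  have hc := c_le k t
  unfold ωA
  split_ifs with h1 h2
  · omega
  · have : d k t = 3 * k + 3 - c k t := rfl
    omega
  · have hd : d k t = 3 * k + 3 - c k t := rfl
    have := f_lt_k k j (by omega) (by omega)
    omega

lemma ωF_le (k j : ℕ) (hj : j < 3 * k + 3) : ωF k j ≤ 3 * k + 2 := by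
  unfold ωF
  split_ifs with h1 h2
  · omega
  · omega
  · have := f_lt_k k j (by omega) (by omega)
    omega

lemma map_val_univ (n : ℕ) :
    Multiset.map Fin.val (Finset.univ : Finset (Fin n)).val = (Finset.range n).val := by
  have h := Fin.map_valEmbedding_univ (n := n)
  have := congrArg Finset.val h
  rw [Finset.map_val] at this
  simpa [Nat.Iio_eq_range] using this

lemma part1 (k : ℕ) :
    Multiset.map (ωF k) (Finset.range k).val = (Finset.Icc (2 * k + 3) (3 * k + 2)).val := by
  have h1 : Multiset.map (ωF k) (Finset.range k).val
      = Multiset.map (fun j => j + (2 * k + 3)) (Finset.range k).val := by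
    apply Multiset.map_congr rfl
    intro j hj
    rw [Finset.mem_val, Finset.mem_range] at hj
    unfold ωF; rw [if_pos hj]
  rw [h1]
  have hn1 : (Multiset.map (fun j => j + (2 * k + 3)) (Finset.range k).val).Nodup :=
    (Finset.range k).nodup.map (fun a b h => by omega)
  rw [Multiset.Nodup.ext hn1 (Finset.Icc (2 * k + 3) (3 * k + 2)).nodup]
  intro a
  simp only [Multiset.mem_map, Finset.mem_val, Finset.mem_range, Finset.mem_Icc]
  constructor
  · rintro ⟨j, hj, rfl⟩; omega
  · intro ha; exact ⟨a - (2 * k + 3), by omega, by omega⟩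

lemma part2 (k : ℕ) :
    Multiset.map (ωF k) (Finset.Icc k (2 * k + 2)).val
      = Multiset.replicate (k + 3) (k + 2) := by
  have h1 : Multiset.map (ωF k) (Finset.Icc k (2 * k + 2)).val
      = Multiset.map (fun _ => k + 2) (Finset.Icc k (2 * k + 2)).val := by
    apply Multiset.map_congr rfl
    intro j hj
    rw [Finset.mem_val, Finset.mem_Icc] at hj
    unfold ωF; rw [if_neg (by omega), if_pos (by omega)]
  rw [h1, Multiset.map_const']
  have hcard : Multiset.card (Finset.Icc k (2 * k + 2)).val = k + 3 := by
    show (Finset.Icc k (2 * k + 2)).card = k + 3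
    rw [Nat.card_Icc]; omega
  rw [hcard]

lemma part3 (k : ℕ) :
    Multiset.map (ωF k) (Finset.Icc (2 * k + 3) (3 * k + 2)).val
      = (Finset.range k).val := by
  have hmem : ∀ j ∈ (Finset.Icc (2 * k + 3) (3 * k + 2)).val,
      2 * k + 3 ≤ j ∧ j ≤ 3 * k + 2 := by
    intro j hj; rwa [Finset.mem_val, Finset.mem_Icc] at hj
  have hnodup : (Multiset.map (ωF k) (Finset.Icc (2 * k + 3) (3 * k + 2)).val).Nodup := by
    apply Multiset.Nodup.map_on _ (Finset.Icc (2 * k + 3) (3 * k + 2)).nodup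
    intro x hx y hy hxy
    obtain ⟨hx1, hx2⟩ := hmem x hx
    obtain ⟨hy1, hy2⟩ := hmem y hy
    rw [ωF_high k x hx1, ωF_high k y hy1] at hxy
    exact f_injOn k x hx1 hx2 y hy1 hy2 hxy
  have hsub : Multiset.map (ωF k) (Finset.Icc (2 * k + 3) (3 * k + 2)).val
      ⊆ (Finset.range k).val := by
    intro a ha
    rw [Multiset.mem_map] at ha
    obtain ⟨j, hj, rfl⟩ := ha
    obtain ⟨hj1, hj2⟩ := hmem j hj
    rw [Finset.mem_val, Finset.mem_range, ωF_high k j hj1]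
    exact f_lt_k k j hj1 hj2
  have hle := (Multiset.le_iff_subset hnodup).mpr hsub
  refine Multiset.eq_of_le_of_card_le hle ?_
  rw [Multiset.card_map]
  show (Finset.range k).card ≤ (Finset.Icc (2 * k + 3) (3 * k + 2)).card
  rw [Finset.card_range, Nat.card_Icc]; omega

theorem main_lemma (k : ℕ) (ω0 : Fin (3 * k + 3) → ℕ)
    (hω0 : ∀ i : Fin (3 * k + 3),
      ω0 i = if k ≤ (i : ℕ) ∧ (i : ℕ) ≤ 2 * k + 2 then k + 2 else (i : ℕ)) :
    ∀ t, cleanState (3 * k + 3) ω0 t = state k t := by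
  intro t
  induction t with
  | zero =>
    have hc0 : c k 0 = 0 := by unfold c; norm_num
    have hd0 : d k 0 = 3 * k + 3 := by unfold d; omega
    show (ω0, Finset.univ) = state k 0
    unfold state
    rw [if_pos (Nat.zero_le _), Prod.mk.injEq]
    constructor
    · funext v
      rw [hω0 v]
      show _ = ωA k 0 (v : ℕ)
      unfold ωA
      rw [hd0, hc0, if_pos v.isLt]
      simp
    · ext v
      simp [hd0, v.isLt]
  | succ t ih =>
    show cleanStep (3 * k + 3) (cleanState (3 * k + 3) ω0 t) = state k (t + 1)
    rw [ih, step]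

end CliqueAux

theorem stmt_12 (k : ℕ)
    (ω0 : Fin (3 * k + 3) → ℕ)
    (hω0 : ∀ i : Fin (3 * k + 3),
      ω0 i = if k ≤ (i : ℕ) ∧ (i : ℕ) ≤ 2 * k + 2 then k + 2 else (i : ℕ)) :
    (∃ T : ℕ, (cleanState (3 * k + 3) ω0 T).2 = ∅ ∧
      Multiset.map (cleanState (3 * k + 3) ω0 T).1 Finset.univ.val
        = (Finset.range k).val + Multiset.replicate (k + 3) (k + 2)
            + (Finset.Icc (2 * k + 3) (3 * k + 2)).val) ∧
    ∀ t : ℕ, ∀ v : Fin (3 * k + 3), (cleanState (3 * k + 3) ω0 t).1 v ≤ 3 * k + 2 := by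
  have hmain := CliqueAux.main_lemma k ω0 hω0
  constructor
  · refine ⟨Nat.size k + 2, ?_, ?_⟩
    · rw [hmain]
      unfold CliqueAux.state
      rw [if_neg (by omega), if_neg (by omega)]
    · rw [hmain]
      have hS : CliqueAux.state k (Nat.size k + 2)
          = (fun v : Fin (3 * k + 3) => CliqueAux.ωF k v, ∅) := by
        unfold CliqueAux.state
        rw [if_neg (by omega), if_neg (by omega)]
      rw [hS]
      show Multiset.map ((CliqueAux.ωF k) ∘ Fin.val) Finset.univ.val = _
      rw [← Multiset.map_map, CliqueAux.map_val_univ]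
      -- split the range
      have e1 : Disjoint (Finset.range k) (Finset.Icc k (2 * k + 2)) := by
        rw [Finset.disjoint_left]
        intro a ha hb
        rw [Finset.mem_range] at ha
        rw [Finset.mem_Icc] at hb
        omega
      have e2 : Disjoint ((Finset.range k).disjUnion (Finset.Icc k (2 * k + 2)) e1)
          (Finset.Icc (2 * k + 3) (3 * k + 2)) := by
        rw [Finset.disjoint_left]
        intro a ha hb
        rw [Finset.mem_disjUnion, Finset.mem_range, Finset.mem_Icc] at ha
        rw [Finset.mem_Icc] at hb
        omega
      have e3 : ((Finset.range k).disjUnion (Finset.Icc k (2 * k + 2)) e1).disjUnion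
          (Finset.Icc (2 * k + 3) (3 * k + 2)) e2 = Finset.range (3 * k + 3) := by
        ext a
        simp only [Finset.mem_disjUnion, Finset.mem_range, Finset.mem_Icc]
        omega
      have e4 : (Finset.range (3 * k + 3)).val
          = (Finset.range k).val + (Finset.Icc k (2 * k + 2)).val
            + (Finset.Icc (2 * k + 3) (3 * k + 2)).val := by
        rw [← e3]; rfl
      rw [e4, Multiset.map_add, Multiset.map_add,
        CliqueAux.part1, CliqueAux.part2, CliqueAux.part3]
      abel
  · intro t v
    rw [hmain]
    unfold CliqueAux.state
    split_ifs with h1 h2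
    · exact CliqueAux.ωA_le k t v v.isLt
    · exact CliqueAux.ωF_le k v v.isLt
    · exact CliqueAux.ωF_le k v v.isLt
end

section
/- Let k > 8 and let \(\ell = \lceil \log_2(k+1) \rceil\). In the clique cleaning model on K_{3k+3} with \(\omega_0(v_i) = k+2\) for \(k \le i \le 2k+2\) and \(\omega_0(v_i) = i\) otherwise, no vertex v_i with \(i \le 2k+2\) is cleaned at any step \(t \le \ell\); specifically, before k vertices have been cleaned, such a vertex has at most \(2n' + 1\) brushes where the number of dirty neighbors is at least \(2n'+3\) for the appropriate count n'. -/
namespace CleanAux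

variable (n : ℕ) (ω0 : Fin n → ℕ)

/-- The set of primed vertices at time `t`. -/
def Pset (t : ℕ) : Finset (Fin n) :=
  (cleanState n ω0 t).2.filter
    (fun v => (cleanState n ω0 t).2.card - 1 ≤ (cleanState n ω0 t).1 v)

lemma dirty_succ (t : ℕ) :
    (cleanState n ω0 (t+1)).2 = (cleanState n ω0 t).2 \ Pset n ω0 t := rfl

lemma Pset_subset (t : ℕ) : Pset n ω0 t ⊆ (cleanState n ω0 t).2 :=
  Finset.filter_subset _ _

lemma brush_succ (t : ℕ) (v : Fin n) (hv : v ∈ (cleanState n ω0 (t+1)).2) :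
    (cleanState n ω0 (t+1)).1 v = (cleanState n ω0 t).1 v + (Pset n ω0 t).card := by
  rw [dirty_succ, Finset.mem_sdiff] at hv
  show (if v ∈ Pset n ω0 t then _ else if v ∈ (cleanState n ω0 t).2 then _ else _) = _
  rw [if_neg hv.2, if_pos hv.1]
  rfl

lemma card_succ (t : ℕ) :
    (cleanState n ω0 (t+1)).2.card
      = (cleanState n ω0 t).2.card - (Pset n ω0 t).card := by
  rw [dirty_succ, Finset.card_sdiff_of_subset (Pset_subset n ω0 t)]

lemma card_le (t : ℕ) : (cleanState n ω0 t).2.card ≤ n := by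
  simpa using Finset.card_le_card (Finset.subset_univ (cleanState n ω0 t).2)

lemma card_antitone (t : ℕ) :
    (cleanState n ω0 (t+1)).2.card ≤ (cleanState n ω0 t).2.card := by
  rw [card_succ]; omega

/-- The brush formula: a still-dirty vertex has gained exactly as many brushes as
there are cleaned vertices. -/
lemma brush_formula (t : ℕ) (v : Fin n) (hv : v ∈ (cleanState n ω0 t).2) :
    (cleanState n ω0 t).1 v = ω0 v + (n - (cleanState n ω0 t).2.card) := by
  induction t with
  | zero =>
    show ω0 v = ω0 v + (n - (Finset.univ : Finset (Fin n)).card)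
    simp
  | succ t ih =>
    have hv' : v ∈ (cleanState n ω0 t).2 := by
      rw [dirty_succ, Finset.mem_sdiff] at hv; exact hv.1
    have hP : (Pset n ω0 t).card ≤ (cleanState n ω0 t).2.card :=
      Finset.card_le_card (Pset_subset n ω0 t)
    have hc := card_le n ω0 t
    rw [brush_succ n ω0 t v hv, ih hv', card_succ]
    omega

/-- Anyone cleaned up to time `t+1` had many initial brushes:
`ω0 v + 2 xₜ + 1 ≥ n` where `xₜ` is the number cleaned by time `t`. -/
lemma cleaned_big (t : ℕ) (v : Fin n) (hv : v ∉ (cleanState n ω0 (t+1)).2) :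
    n ≤ ω0 v + 2 * (n - (cleanState n ω0 t).2.card) + 1 := by
  induction t with
  | zero =>
    rw [dirty_succ, Finset.mem_sdiff] at hv
    push_neg at hv
    have hvP : v ∈ Pset n ω0 0 := hv (Finset.mem_univ v)
    rw [Pset, Finset.mem_filter] at hvP
    have hb := brush_formula n ω0 0 v hvP.1
    have := hvP.2
    have hc := card_le n ω0 0
    omega
  | succ t ih =>
    rw [dirty_succ, Finset.mem_sdiff] at hv
    push_neg at hv
    by_cases hd : v ∈ (cleanState n ω0 (t+1)).2
    · have hvP := hv hd
      rw [Pset, Finset.mem_filter] at hvP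
      have hb := brush_formula n ω0 (t+1) v hvP.1
      have := hvP.2
      have hc := card_le n ω0 (t+1)
      omega
    · have := ih hd
      have hmono := card_antitone n ω0 t
      have hc := card_le n ω0 (t+1)
      omega

end CleanAux

theorem stmt_13 (k : ℕ) (hk : 8 < k) (ℓ : ℕ) (hℓ : ℓ = Nat.clog 2 (k + 1))
    (ω0 : Fin (3 * k + 3) → ℕ)
    (hω0 : ∀ i : Fin (3 * k + 3),
      ω0 i = if k ≤ (i : ℕ) ∧ (i : ℕ) ≤ 2 * k + 2 then k + 2 else (i : ℕ)) :
    ∀ t : ℕ, t ≤ ℓ → ∀ i : Fin (3 * k + 3), (i : ℕ) ≤ 2 * k + 2 →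
      i ∈ (cleanState (3 * k + 3) ω0 t).2 := by
  have hℓpos : 1 ≤ ℓ := by
    rw [hℓ]; exact Nat.clog_pos (by norm_num) (by omega)
  have hpow : 2 ^ (ℓ - 1) < k + 1 := by
    rw [hℓ]; exact Nat.pow_pred_clog_lt_self (by norm_num) (by omega)
  -- counting lemma: few vertices have many initial brushes
  have count_lemma : ∀ m : ℕ, m ≤ k - 1 →
      (Finset.univ.filter (fun i : Fin (3 * k + 3) => 3 * k + 2 ≤ ω0 i + 2 * m)).card
        ≤ 2 * m + 1 := by
    intro m hm
    have hmem : ∀ i ∈ Finset.univ.filter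
        (fun i : Fin (3 * k + 3) => 3 * k + 2 ≤ ω0 i + 2 * m),
        3 * k + 2 ≤ (i : ℕ) + 2 * m := by
      intro i hi
      rw [Finset.mem_filter] at hi
      have h2 := hi.2
      rw [hω0 i] at h2
      split_ifs at h2 <;> omega
    calc (Finset.univ.filter (fun i : Fin (3 * k + 3) => 3 * k + 2 ≤ ω0 i + 2 * m)).card
        ≤ (Finset.range (2 * m + 1)).card := by
          refine Finset.card_le_card_of_injOn
            (fun i => (i : ℕ) - (3 * k + 2 - 2 * m)) ?_ ?_
          · intro i hi
            have h1 := hmem i hi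
            have h2 : (i : ℕ) < 3 * k + 3 := i.isLt
            rw [Finset.mem_coe, Finset.mem_range]
            show (i : ℕ) - (3 * k + 2 - 2 * m) < 2 * m + 1
            omega
          · intro i hi j hj hij
            have h1 := hmem i hi
            have h2 := hmem j hj
            apply Fin.ext
            have hij' : (i : ℕ) - (3 * k + 2 - 2 * m) = (j : ℕ) - (3 * k + 2 - 2 * m) := hij
            omega
      _ = 2 * m + 1 := Finset.card_range _
  -- main induction
  have main : ∀ t : ℕ, t ≤ ℓ →
      (∀ i : Fin (3 * k + 3), (i : ℕ) ≤ 2 * k + 2 → i ∈ (cleanState (3 * k + 3) ω0 t).2)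
      ∧ (3 * k + 3 - (cleanState (3 * k + 3) ω0 t).2.card) + 1 ≤ 2 ^ t := by
    intro t
    induction t with
    | zero =>
      intro _
      refine ⟨fun i _ => Finset.mem_univ i, ?_⟩
      show 3 * k + 3 - (Finset.univ : Finset (Fin (3 * k + 3))).card + 1 ≤ 1
      simp
    | succ t ih =>
      intro ht
      obtain ⟨ihD, ihx⟩ := ih (by omega)
      have hcardle := CleanAux.card_le (3 * k + 3) ω0 t
      have hcardle' := CleanAux.card_le (3 * k + 3) ω0 (t + 1)
      -- x t ≤ k - 1
      have hxk : 3 * k + 3 - (cleanState (3 * k + 3) ω0 t).2.card ≤ k - 1 := by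
        have h1 : 2 ^ t ≤ 2 ^ (ℓ - 1) := Nat.pow_le_pow_right (by norm_num) (by omega)
        omega
      constructor
      · -- low/mid vertices stay dirty
        intro i hi
        have hiD := ihD i hi
        rw [CleanAux.dirty_succ, Finset.mem_sdiff]
        refine ⟨hiD, ?_⟩
        intro hiP
        rw [CleanAux.Pset, Finset.mem_filter] at hiP
        have hb := CleanAux.brush_formula (3 * k + 3) ω0 t i hiD
        have hcond := hiP.2
        rw [hb] at hcond
        have hω : ω0 i ≤ k + 2 := by
          rw [hω0 i]; split_ifs <;> omega
        omega
      · -- cleaned count at most doubles plus one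
        have hsub : Finset.univ \ (cleanState (3 * k + 3) ω0 (t + 1)).2
            ⊆ Finset.univ.filter (fun i : Fin (3 * k + 3) =>
              3 * k + 2 ≤ ω0 i + 2 * (3 * k + 3 - (cleanState (3 * k + 3) ω0 t).2.card)) := by
          intro v hv
          rw [Finset.mem_sdiff] at hv
          have := CleanAux.cleaned_big (3 * k + 3) ω0 t v hv.2
          rw [Finset.mem_filter]
          exact ⟨Finset.mem_univ v, by omega⟩
        have hcard := Finset.card_le_card hsub
        have hcompl : (Finset.univ \ (cleanState (3 * k + 3) ω0 (t + 1)).2).card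
            = 3 * k + 3 - (cleanState (3 * k + 3) ω0 (t + 1)).2.card := by
          rw [Finset.card_sdiff_of_subset (Finset.subset_univ _)]
          simp
        have hcount := count_lemma _ hxk
        rw [hcompl] at hcard
        have hdbl : 3 * k + 3 - (cleanState (3 * k + 3) ω0 (t + 1)).2.card
            ≤ 2 * (3 * k + 3 - (cleanState (3 * k + 3) ω0 t).2.card) + 1 :=
          le_trans hcard hcount
        have h2t : 2 * 2 ^ t = 2 ^ (t + 1) := by ring
        omega
  intro t ht i hi
  exact (main t ht).1 i hi
end
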